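/- The 5-fold blow-up of the 5-cycle C_5 (the 25-vertex graph obtained by replacing each vertex of C_5 by an independent set of 5 vertices and each edge by a complete bipartite graph between the corresponding sets) is triangle-free and not bipartite, and its complement G satisfies η(G) := ν*(G)/(25·24) = 1/4. -/

import Mathlib

open Finset
open scoped Classical

variable {V : Type*}

/-- A triangle packing of `G`: a finite collection of triangles (3-cliques) of `G` that are
pairwise edge-disjoint (i.e. any two distinct members share at most one vertex). -/
def SimpleGraph.IsTrianglePacking [DecidableEq V] (G : SimpleGraph V)
    (P : Finset (Finset V)) : Prop :=
  (∀ T ∈ P, G.IsNClique 3 T) ∧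
    (P : Set (Finset V)).Pairwise fun S T => (S ∩ T).card ≤ 1

/-- The maximum size (number of edges, i.e. `3 * number of triangles`) of a triangle packing. -/
noncomputable def SimpleGraph.triangleNu [DecidableEq V] (G : SimpleGraph V) : ℕ :=
  sSup {m | ∃ P : Finset (Finset V), G.IsTrianglePacking P ∧ m = 3 * P.card}

/-- A fractional triangle packing of `G`: a weight function on triples of vertices, supported
on triangles of `G`, with values in `[0,1]`, such that every edge carries total weight ≤ 1. -/
def SimpleGraph.IsFracTrianglePacking [Fintype V] [DecidableEq V] (G : SimpleGraph V)
    (w : Finset V → ℝ) : Prop :=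
  (∀ T, 0 ≤ w T ∧ w T ≤ 1) ∧
  (∀ T, ¬ G.IsNClique 3 T → w T = 0) ∧
  ∀ u v : V, G.Adj u v →
    ∑ T ∈ univ.filter (fun T : Finset V => G.IsNClique 3 T ∧ u ∈ T ∧ v ∈ T), w T ≤ 1

/-- `ν*(G)`: the maximum size `3 ∑ w(T)` of a fractional triangle packing of `G`. -/
noncomputable def SimpleGraph.nuStar [Fintype V] [DecidableEq V] (G : SimpleGraph V) : ℝ :=
  sSup {x | ∃ w : Finset V → ℝ, G.IsFracTrianglePacking w ∧ x = 3 * ∑ T : Finset V, w T}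

/-- `η(G) = ν*(G)/(n(n-1))` where `n = |V(G)|`. -/
noncomputable def SimpleGraph.etaPack [Fintype V] [DecidableEq V] (G : SimpleGraph V) : ℝ :=
  G.nuStar / ((Fintype.card V : ℝ) * ((Fintype.card V : ℝ) - 1))

/-- A fractional triangle decomposition: a fractional packing with equality on every edge. -/
def SimpleGraph.IsFracTriangleDecomposition [Fintype V] [DecidableEq V] (G : SimpleGraph V)
    (w : Finset V → ℝ) : Prop :=
  G.IsFracTrianglePacking w ∧
  ∀ u v : V, G.Adj u v →
    ∑ T ∈ univ.filter (fun T : Finset V => G.IsNClique 3 T ∧ u ∈ T ∧ v ∈ T), w T = 1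

/-- `G` is `ε`-far from bipartite: every bipartite subgraph misses at least `ε n²` edges. -/
def FarFromBipartite [Fintype V] [DecidableEq V] (ε : ℝ) (G : SimpleGraph V) : Prop :=
  ∀ H : SimpleGraph V, H ≤ G → H.Colorable 2 →
    ε * (Fintype.card V : ℝ) ^ 2 ≤ (G.edgeFinset.card : ℝ) - (H.edgeFinset.card : ℝ)

/-- The disjoint union of two cliques on `⌈n/2⌉`-ish halves of `Fin n`
(the first `n/2` vertices form one clique, the rest form the other). -/
def twoCliques (n : ℕ) : SimpleGraph (Fin n) where
  Adj u v := u ≠ v ∧ ((u : ℕ) < n / 2 ↔ (v : ℕ) < n / 2)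
  symm := ⟨by intro u v h; exact ⟨h.1.symm, h.2.symm⟩⟩
  loopless := ⟨by intro u h; exact h.1 rfl⟩

/-- `g(n)`: minimum over co-triangle-free `n`-vertex graphs of the max triangle packing size. -/
noncomputable def gInt (n : ℕ) : ℕ :=
  sInf {m | ∃ G : SimpleGraph (Fin n), Gᶜ.CliqueFree 3 ∧ m = G.triangleNu}

/-- `g*(n)`: minimum over co-triangle-free `n`-vertex graphs of `ν*`. -/
noncomputable def gStar (n : ℕ) : ℝ :=
  sInf {x | ∃ G : SimpleGraph (Fin n), Gᶜ.CliqueFree 3 ∧ x = G.nuStar}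


/-- The 5-fold blow-up of the 5-cycle: vertices are `ZMod 5 × Fin 5`, and two vertices are
adjacent iff their first coordinates are consecutive in the cyclic order. -/
def C5Blowup : SimpleGraph (ZMod 5 × Fin 5) where
  Adj u v := u.1 = v.1 + 1 ∨ v.1 = u.1 + 1
  symm := ⟨fun _ _ h => Or.symm h⟩
  loopless := by
    constructor
    intro u h
    rcases h with h | h <;> exact absurd (left_eq_add.mp h) (by decide)

namespace Stmt16
abbrev VV : Type := ZMod 5 × Fin 5

lemma zne : ∀ i : ZMod 5, i ≠ i + 2 := by decide

lemma compl_adj' (u v : VV) : (C5Blowupᶜ).Adj u v ↔ u ≠ v ∧ ¬(u.1 = v.1 + 1 ∨ v.1 = u.1 + 1) := by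
  rw [SimpleGraph.compl_adj]; exact Iff.rfl

def tf (p : ZMod 5 × Fin 5 × Fin 5 × Fin 5) : Finset VV :=
  {(p.1, p.2.1), (p.1, p.2.2.1), (p.1 + 2, p.2.2.2)}

def Pdom : Finset (ZMod 5 × Fin 5 × Fin 5 × Fin 5) :=
  univ.filter fun p => p.2.1 < p.2.2.1

def S : Finset (Finset VV) := Pdom.image tf

lemma zadj : ∀ i : ZMod 5, ¬(i = i + 1 ∨ i = i + 1) ∧ ¬(i = (i+2) + 1 ∨ i + 2 = i + 1)
    ∧ ¬((i+2) = i + 1 ∨ i = (i+2) + 1) := by decide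

lemma mem_S_clique : ∀ T ∈ S, (C5Blowupᶜ).IsNClique 3 T := by
  intro T hT
  simp only [S, Pdom, mem_image, mem_filter] at hT
  obtain ⟨⟨i, a, b, c⟩, ⟨-, hab⟩, rfl⟩ := hT
  simp only at hab
  have hab' : ((i,a) : VV) ≠ (i,b) := fun h => absurd (Prod.mk.injEq .. ▸ h).2 (ne_of_lt hab)
  have hac : ((i,a) : VV) ≠ (i+2,c) := fun h => absurd (Prod.mk.injEq .. ▸ h).1 (zne i)
  have hbc : ((i,b) : VV) ≠ (i+2,c) := fun h => absurd (Prod.mk.injEq .. ▸ h).1 (zne i)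
  constructor
  · intro x hx y hy hxy
    simp only [tf, coe_insert, coe_singleton, Set.mem_insert_iff, Set.mem_singleton_iff] at hx hy
    rw [compl_adj']
    refine ⟨hxy, ?_⟩
    rcases hx with rfl | rfl | rfl <;> rcases hy with rfl | rfl | rfl <;>
      first
        | exact absurd rfl hxy
        | exact (zadj i).1
        | exact (zadj i).2.1
        | exact (zadj i).2.2
  · simp only [tf]
    rw [card_insert_of_notMem (by simp [hab', hac]), card_insert_of_notMem (by simp [hbc]),
      card_singleton]

lemma third_class (u v : VV) (huv : (C5Blowupᶜ).Adj u v) :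
    ∃ k : ZMod 5, ∀ T ∈ S, u ∈ T → v ∈ T → ∃ c : Fin 5, T = {u, v, (k, c)} := by
  refine ⟨if u.1 = v.1 then u.1 + 2 else if u.1 = v.1 + 2 then v.1 else u.1, ?_⟩
  intro T hT hu hv
  obtain ⟨hne, -⟩ := (compl_adj' u v).mp huv
  simp only [S, Pdom, mem_image, mem_filter] at hT
  obtain ⟨⟨i, a, b, c⟩, ⟨-, hab⟩, rfl⟩ := hT
  simp only at hab
  have hii2 : i ≠ i + 2 := zne i
  have h42 : ∀ i : ZMod 5, ¬ i = (i + 2) + 2 := by decide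
  have h24 : ∀ i : ZMod 5, ¬ (i + 2) = i := fun i h => (zne i) h.symm
  simp only [tf, mem_insert, mem_singleton] at hu hv
  rcases hu with rfl | rfl | rfl <;> rcases hv with h | h | h
  · exact absurd h.symm hne
  · subst h
    refine ⟨c, ?_⟩
    rw [if_pos rfl]
    first | rfl | (ext x; simp [tf, Prod.mk.injEq]; tauto)
  · subst h
    refine ⟨b, ?_⟩
    rw [if_neg hii2, if_neg (h42 i)]
    first | rfl | (ext x; simp [tf, Prod.mk.injEq]; tauto)
  · subst h
    refine ⟨c, ?_⟩
    rw [if_pos rfl]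
    first | rfl | (ext x; simp [tf, Prod.mk.injEq]; tauto)
  · exact absurd h.symm hne
  · subst h
    refine ⟨a, ?_⟩
    rw [if_neg hii2, if_neg (h42 i)]
    first | rfl | (ext x; simp [tf, Prod.mk.injEq]; tauto)
  · subst h
    refine ⟨b, ?_⟩
    rw [if_neg (h24 i), if_pos rfl]
    first | rfl | (ext x; simp [tf, Prod.mk.injEq]; tauto)
  · subst h
    refine ⟨a, ?_⟩
    rw [if_neg (h24 i), if_pos rfl]
    first | rfl | (ext x; simp [tf, Prod.mk.injEq]; tauto)
  · exact absurd h.symm hne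


noncomputable def w (T : Finset VV) : ℝ := if T ∈ S then 1/5 else 0

set_option maxRecDepth 10000 in
lemma card_Pdom : Pdom.card = 250 := by decide

lemma tf_injOn : Set.InjOn tf Pdom := by
  rintro ⟨i, a, b, c⟩ hp ⟨j, d, e, f⟩ hq h
  simp only [Pdom, mem_coe, mem_filter] at hp hq
  have hab : a < b := hp.2
  have hde : d < e := hq.2
  simp only [tf] at h
  have h1 : ((j,d) : VV) ∈ ({((i:ZMod 5),a),(i,b),(i+2,c)} : Finset VV) := by rw [h]; simp
  have h2 : ((j,e) : VV) ∈ ({((i:ZMod 5),a),(i,b),(i+2,c)} : Finset VV) := by rw [h]; simp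
  have h3 : ((j+2,f) : VV) ∈ ({((i:ZMod 5),a),(i,b),(i+2,c)} : Finset VV) := by rw [h]; simp
  simp only [mem_insert, mem_singleton, Prod.mk.injEq] at h1 h2 h3
  simp only [Prod.mk.injEq]
  rcases h1 with ⟨h1a, h1b⟩ | ⟨h1a, h1b⟩ | ⟨h1a, h1b⟩ <;>
    rcases h2 with ⟨h2a, h2b⟩ | ⟨h2a, h2b⟩ | ⟨h2a, h2b⟩ <;>
      rcases h3 with ⟨h3a, h3b⟩ | ⟨h3a, h3b⟩ | ⟨h3a, h3b⟩ <;>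
        first
          | exact ⟨h1a.symm, h1b.symm, h2b.symm, h3b.symm⟩
          | exact absurd (h1a.symm.trans h2a) (zne i)
          | exact absurd (h2a.symm.trans h1a) (zne i)
          | exact absurd (h1b.trans h2b.symm) (ne_of_lt hde)
          | (rw [h1b, h2b] at hde; exact absurd hde (lt_asymm hab))
          | exact absurd ((h3a.trans h1a.symm).symm) (zne j)

lemma card_S : S.card = 250 := by
  rw [S, Finset.card_image_of_injOn tf_injOn, card_Pdom]

lemma sum_w : ∑ T : Finset VV, w T = 50 := by
  have : ∑ T : Finset VV, w T = ∑ T ∈ (univ : Finset (Finset VV)).filter (· ∈ S), (1/5 : ℝ) := by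
    rw [Finset.sum_filter]; rfl
  rw [this, Finset.filter_mem_eq_inter, Finset.univ_inter, Finset.sum_const, card_S,
    nsmul_eq_mul]
  norm_num

lemma sum_w_le (u v : VV) (huv : (C5Blowupᶜ).Adj u v) (A : Finset (Finset VV))
    (hA : ∀ T ∈ A, u ∈ T ∧ v ∈ T) : ∑ T ∈ A, w T ≤ 1 := by
  obtain ⟨k, hk⟩ := third_class u v huv
  have h1 : ∑ T ∈ A, w T = ∑ T ∈ A.filter (· ∈ S), (1/5 : ℝ) := by
    rw [Finset.sum_filter]; rfl
  have hsub : A.filter (· ∈ S) ⊆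
      (univ : Finset (Fin 5)).image fun c => ({u, v, (k, c)} : Finset VV) := by
    intro T hT
    simp only [mem_filter] at hT
    obtain ⟨hTA, hTS⟩ := hT
    obtain ⟨c, rfl⟩ := hk T hTS (hA T hTA).1 (hA T hTA).2
    exact mem_image.mpr ⟨c, mem_univ c, rfl⟩
  have hcard : (A.filter (· ∈ S)).card ≤ 5 := by
    calc (A.filter (· ∈ S)).card ≤ _ := Finset.card_le_card hsub
      _ ≤ (univ : Finset (Fin 5)).card := Finset.card_image_le
      _ = 5 := by simp
  rw [h1, Finset.sum_const, nsmul_eq_mul]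
  have : ((A.filter (· ∈ S)).card : ℝ) ≤ 5 := by exact_mod_cast hcard
  nlinarith

lemma w_packing : (C5Blowupᶜ).IsFracTrianglePacking w := by
  refine ⟨fun T => ?_, fun T hT => ?_, fun u v huv => ?_⟩
  · unfold w; split <;> norm_num
  · unfold w
    rw [if_neg (fun hTS => hT (mem_S_clique T hTS))]
  · apply sum_w_le u v huv
    intro T hT
    simp only [mem_filter] at hT
    exact ⟨hT.2.2.1, hT.2.2.2⟩

def E : Finset (VV × VV) := univ.filter fun e => e.1.1 = e.2.1 ∧ e.1.2 < e.2.2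

set_option maxRecDepth 10000 in
lemma card_E : E.card = 50 := by decide

lemma E_adj : ∀ e ∈ E, (C5Blowupᶜ).Adj e.1 e.2 := by
  intro e he
  simp only [E, mem_filter, mem_univ, true_and] at he
  rw [compl_adj']
  refine ⟨fun h => absurd (congrArg Prod.snd h) (ne_of_lt he.2), ?_⟩
  rw [he.1]
  exact (zadj e.2.1).1

lemma tri_has_E : ∀ T, (C5Blowupᶜ).IsNClique 3 T → ∃ e ∈ E, e.1 ∈ T ∧ e.2 ∈ T := by
  intro T hT
  obtain ⟨x, y, z, hxy, hxz, hyz, rfl⟩ := Finset.card_eq_three.mp hT.card_eq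
  have hxy' := (compl_adj' x y).mp (hT.isClique (by simp) (by simp) hxy)
  have hyz' := (compl_adj' y z).mp (hT.isClique (by simp) (by simp) hyz)
  have hxz' := (compl_adj' x z).mp (hT.isClique (by simp) (by simp) hxz)
  have zkey : ∀ p q r : ZMod 5, ¬(p = q + 1 ∨ q = p + 1) → ¬(q = r + 1 ∨ r = q + 1) →
      ¬(p = r + 1 ∨ r = p + 1) → (p = q ∨ q = r ∨ p = r) := by decide
  have key := zkey x.1 y.1 z.1 hxy'.2 hyz'.2 hxz'.2
  have mk : ∀ u v : VV, u ≠ v → u.1 = v.1 → u ∈ ({x,y,z} : Finset VV) → v ∈ ({x,y,z} : Finset VV) →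
      ∃ e ∈ E, e.1 ∈ ({x,y,z} : Finset VV) ∧ e.2 ∈ ({x,y,z} : Finset VV) := by
    intro u v hne h1 hu hv
    have h2 : u.2 ≠ v.2 := fun h2 => hne (Prod.ext h1 h2)
    rcases lt_or_gt_of_ne h2 with h | h
    · refine ⟨(u, v), ?_, hu, hv⟩
      simp only [E, mem_filter, mem_univ, true_and]
      exact ⟨h1, h⟩
    · refine ⟨(v, u), ?_, hv, hu⟩
      simp only [E, mem_filter, mem_univ, true_and]
      exact ⟨h1.symm, h⟩
  rcases key with h | h | h
  · exact mk x y hxy'.1 h (by simp) (by simp)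
  · exact mk y z hyz'.1 h (by simp) (by simp)
  · exact mk x z hxz'.1 h (by simp) (by simp)

lemma upper_bound (w' : Finset VV → ℝ) (hp : (C5Blowupᶜ).IsFracTrianglePacking w') :
    ∑ T : Finset VV, w' T ≤ 50 := by
  obtain ⟨hw01, hw0, hwe⟩ := hp
  -- insulated version of the edge constraint
  have hwe' : ∀ u v : VV, (C5Blowupᶜ).Adj u v → ∀ A : Finset (Finset VV),
      (∀ T ∈ A, (C5Blowupᶜ).IsNClique 3 T ∧ u ∈ T ∧ v ∈ T) → ∑ T ∈ A, w' T ≤ 1 := by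
    intro u v huv A hA
    have h := hwe u v huv
    refine le_trans (Finset.sum_le_sum_of_subset_of_nonneg ?_ fun T _ _ => (hw01 T).1) h
    intro T hT
    simp only [mem_filter, mem_univ, true_and]
    exact hA T hT
  set Tri := univ.filter fun T : Finset VV => (C5Blowupᶜ).IsNClique 3 T with hTri
  have hTriMem : ∀ T, T ∈ Tri ↔ (C5Blowupᶜ).IsNClique 3 T := by
    intro T; simp [hTri]
  have h1 : ∑ T : Finset VV, w' T = ∑ T ∈ Tri, w' T :=
    (Finset.sum_subset (filter_subset _ _) fun T _ hT =>
      hw0 T (fun hc => hT ((hTriMem T).mpr hc))).symm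
  have h2 : ∀ T ∈ Tri, w' T ≤ ((E.filter fun e => e.1 ∈ T ∧ e.2 ∈ T).card : ℝ) * w' T := by
    intro T hT
    have hpos : 0 < (E.filter fun e => e.1 ∈ T ∧ e.2 ∈ T).card := by
      obtain ⟨e, he, he1, he2⟩ := tri_has_E T ((hTriMem T).mp hT)
      refine card_pos.mpr ⟨e, ?_⟩
      simp only [mem_filter]
      exact ⟨he, he1, he2⟩
    have hge : (1 : ℝ) ≤ ((E.filter fun e => e.1 ∈ T ∧ e.2 ∈ T).card : ℝ) := by
      exact_mod_cast hpos
    nlinarith [(hw01 T).1]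
  have h3 : ∑ T ∈ Tri, ((E.filter fun e => e.1 ∈ T ∧ e.2 ∈ T).card : ℝ) * w' T
      = ∑ e ∈ E, ∑ T ∈ Tri.filter (fun T => e.1 ∈ T ∧ e.2 ∈ T), w' T := by
    have hcw : ∀ T, ((E.filter fun e => e.1 ∈ T ∧ e.2 ∈ T).card : ℝ) * w' T
        = ∑ e ∈ E, if e.1 ∈ T ∧ e.2 ∈ T then w' T else 0 := by
      intro T
      rw [← Finset.sum_filter, Finset.sum_const, nsmul_eq_mul]
    rw [Finset.sum_congr rfl fun T _ => hcw T, Finset.sum_comm]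
    exact Finset.sum_congr rfl fun e _ => (Finset.sum_filter _ _).symm
  have h4 : ∀ e ∈ E, ∑ T ∈ Tri.filter (fun T => e.1 ∈ T ∧ e.2 ∈ T), w' T ≤ 1 := by
    intro e he
    apply hwe' e.1 e.2 (E_adj e he)
    intro T hT
    simp only [mem_filter, hTriMem] at hT
    obtain ⟨h, h1', h2'⟩ := hT
    exact ⟨(hTriMem T).mp (by simpa [hTri] using h), h1', h2'⟩
  calc ∑ T : Finset VV, w' T = ∑ T ∈ Tri, w' T := h1
    _ ≤ ∑ T ∈ Tri, ((E.filter fun e => e.1 ∈ T ∧ e.2 ∈ T).card : ℝ) * w' T :=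
        Finset.sum_le_sum h2
    _ = ∑ e ∈ E, ∑ T ∈ Tri.filter (fun T => e.1 ∈ T ∧ e.2 ∈ T), w' T := h3
    _ ≤ ∑ e ∈ E, 1 := Finset.sum_le_sum h4
    _ = 50 := by rw [Finset.sum_const, card_E]; norm_num

lemma nuStar_eq : (C5Blowupᶜ).nuStar = 150 := by
  have hmem : (150 : ℝ) ∈ {x | ∃ w' : Finset VV → ℝ,
      (C5Blowupᶜ).IsFracTrianglePacking w' ∧ x = 3 * ∑ T : Finset VV, w' T} :=
    ⟨w, w_packing, by rw [sum_w]; norm_num⟩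
  have hub : ∀ x ∈ {x | ∃ w' : Finset VV → ℝ,
      (C5Blowupᶜ).IsFracTrianglePacking w' ∧ x = 3 * ∑ T : Finset VV, w' T}, x ≤ 150 := by
    rintro x ⟨w', hp, rfl⟩
    have := upper_bound w' hp
    linarith
  exact le_antisymm (csSup_le ⟨150, hmem⟩ hub) (le_csSup ⟨150, hub⟩ hmem)

lemma eta_eq : (C5Blowupᶜ).etaPack = 1 / 4 := by
  rw [SimpleGraph.etaPack, nuStar_eq]
  have hcard : (Fintype.card VV : ℝ) = 25 := by
    rw [Fintype.card_prod, ZMod.card, Fintype.card_fin]; norm_num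
  rw [hcard]
  norm_num

end Stmt16

/-- the 5-fold blow-up of `C₅` is triangle-free and non-bipartite, and its
complement `G` satisfies `η(G) = ν*(G)/(25·24) = 1/4`. -/
theorem stmt16 :
    C5Blowup.CliqueFree 3 ∧ ¬ C5Blowup.Colorable 2 ∧ (C5Blowupᶜ).etaPack = 1 / 4 := by
  refine ⟨?_, ?_, Stmt16.eta_eq⟩
  · intro T hT
    obtain ⟨x, y, z, hxy, hxz, hyz, rfl⟩ := Finset.card_eq_three.mp hT.card_eq
    have h1 : C5Blowup.Adj x y := hT.isClique (by simp) (by simp) hxy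
    have h2 : C5Blowup.Adj y z := hT.isClique (by simp) (by simp) hyz
    have h3 : C5Blowup.Adj x z := hT.isClique (by simp) (by simp) hxz
    have key : ∀ p q r : ZMod 5, (p = q + 1 ∨ q = p + 1) → (q = r + 1 ∨ r = q + 1) →
        ¬(p = r + 1 ∨ r = p + 1) := by decide
    exact key x.1 y.1 z.1 h1 h2 h3
  · rintro ⟨c⟩
    have hadj : ∀ i : ZMod 5, C5Blowup.Adj (i, 0) (i + 1, 0) := fun i => Or.inr rfl
    have h := fun i => c.valid (hadj i)
    have key : ∀ g : ZMod 5 → Fin 2, ¬(∀ i : ZMod 5, g i ≠ g (i + 1)) := by decide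
    exact key (fun i => c (i, 0)) h
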